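/- Let K = ℚ(n,c) be the field of rational functions in two independent variables n and c over ℚ. Then the polynomial P̃_{n,c,4}(X) = X⁴ − 2X³ + (1−n)X² + nX − c is irreducible over K and the Galois group of its splitting field over K is isomorphic to the dihedral group D₄ of order 8. -/

import Mathlib

/-- The field `K = ℚ(n,c)` of rational functions in two independent variables
over `ℚ`: the fraction field of the polynomial ring `ℚ[n,c]`. -/
abbrev K : Type := FractionRing (MvPolynomial (Fin 2) ℚ)

/-- The variable `n` viewed in `K = ℚ(n,c)`. -/
noncomputable def n : K := algebraMap (MvPolynomial (Fin 2) ℚ) K (MvPolynomial.X 0)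

/-- The variable `c` viewed in `K = ℚ(n,c)`. -/
noncomputable def c : K := algebraMap (MvPolynomial (Fin 2) ℚ) K (MvPolynomial.X 1)

open Polynomial in
/-- The quartic `P̃_{n,c,4} = X⁴ - 2X³ + (1-n)X² + nX - c` as a polynomial over
`K = ℚ(n,c)`. -/
noncomputable def P₄ : Polynomial K :=
  X ^ 4 - 2 * X ^ 3 + C (1 - n) * X ^ 2 + C n * X - C c



open Polynomial IntermediateField

section Quad
variable {F E : Type*} [Field F] [Field E] [Algebra F E]

lemma irreducible_X_sq_sub {b : F} (hb : ¬ IsSquare b) : Irreducible (X ^ 2 - C b) :=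
  X_pow_sub_C_irreducible_of_prime Nat.prime_two
    (fun x hx => hb ⟨x, by rw [← hx]; ring⟩)

variable {b : F} {β : E} (hβ : β * β = algebraMap F E b) (hb : ¬ IsSquare b)
include hβ

lemma quad_aeval_zero : aeval β (X ^ 2 - C b) = 0 := by
  simp [pow_two, hβ]

lemma quad_isIntegral : IsIntegral F β :=
  ⟨X ^ 2 - C b, monic_X_pow_sub_C b (by norm_num), by
    simpa using quad_aeval_zero hβ⟩

include hb

lemma quad_minpoly : minpoly F β = X ^ 2 - C b :=
  (minpoly.eq_of_irreducible_of_monic (irreducible_X_sq_sub hb) (quad_aeval_zero hβ)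
    (monic_X_pow_sub_C b (by norm_num))).symm

lemma quad_finrank : Module.finrank F (F⟮β⟯ : IntermediateField F E) = 2 := by
  rw [IntermediateField.adjoin.finrank (quad_isIntegral hβ), quad_minpoly hβ hb,
    natDegree_X_pow_sub_C]

omit hb

/-- Representation of elements of `F⟮β⟯` with `β² = b`. -/
lemma quad_rep {z : E} (hz : z ∈ (F⟮β⟯ : IntermediateField F E)) :
    ∃ p q : F, z = algebraMap F E p + algebraMap F E q * β := by
  have hint := quad_isIntegral hβ
  have hmem : z ∈ (Algebra.adjoin F {β} : Subalgebra F E) := by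
    rw [← IntermediateField.adjoin_simple_toSubalgebra_of_isAlgebraic hint.isAlgebraic]
    exact hz
  rw [Algebra.adjoin_singleton_eq_range_aeval] at hmem
  obtain ⟨P, hP⟩ := hmem
  have hm : (X ^ 2 - C b).Monic := monic_X_pow_sub_C b (by norm_num)
  set m : F[X] := X ^ 2 - C b with hmdef
  set r : F[X] := P %ₘ m with hr
  have hPr : aeval β P = aeval β r := by
    conv_lhs => rw [← Polynomial.modByMonic_add_div P m]
    simp [quad_aeval_zero hβ, ← hmdef, ← hr]; left; rw [hmdef]; exact quad_aeval_zero hβ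
  have hdeg : r.degree < 2 := by
    have := Polynomial.degree_modByMonic_lt P hm
    rwa [hmdef, degree_X_pow_sub_C (by norm_num)] at this
  have hdeg1 : r.degree ≤ 1 := by
    rcases h : r.degree with _ | k
    · exact bot_le
    · rw [h] at hdeg
      have hk : k < 2 := WithBot.coe_lt_coe.mp hdeg
      exact WithBot.coe_le_coe.mpr (Nat.lt_succ_iff.mp hk)
  refine ⟨r.coeff 0, r.coeff 1, ?_⟩
  rw [show z = aeval β P from hP.symm, hPr]
  conv_lhs => rw [Polynomial.eq_X_add_C_of_degree_le_one hdeg1]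
  rw [map_add, map_mul, aeval_C, aeval_X, aeval_C]
  ring

include hb

/-- Independence of `1, β`. -/
lemma quad_indep {p q : F} (h : algebraMap F E p + algebraMap F E q * β = 0) :
    p = 0 ∧ q = 0 := by
  have hinj := (algebraMap F E).injective
  by_cases hq : q = 0
  · subst hq
    simp only [map_zero, zero_mul, add_zero] at h
    exact ⟨hinj (by simpa using h), rfl⟩
  · exfalso
    have hβeq : β = algebraMap F E (-p / q) := by
      have hqE : algebraMap F E q ≠ 0 := by
        simpa using fun hc => hq (hinj (by simpa using hc))
      rw [map_div₀, map_neg, eq_div_iff hqE]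
      linear_combination h
    apply hb
    refine ⟨-p / q, hinj ?_⟩
    rw [map_mul, ← hβeq, hβ]

end Quad

open Polynomial

section Linear
variable {S : Type*} [CommRing S] [IsDomain S]

lemma irreducible_linear {a b : S} (ha : IsUnit a) : Irreducible (C a * X + C b) := by
  have ha0 : a ≠ 0 := ha.ne_zero
  have hdeg : (C a * X + C b).degree = 1 := degree_linear ha0
  have hp0 : (C a * X + C b) ≠ 0 := fun h => by simp [h] at hdeg
  constructor
  · intro hu
    have := degree_eq_zero_of_isUnit hu
    rw [hdeg] at this
    exact one_ne_zero this
  · intro f g hfg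
    have hf0 : f ≠ 0 := fun h => hp0 (by rw [hfg, h, zero_mul])
    have hg0 : g ≠ 0 := fun h => hp0 (by rw [hfg, h, mul_zero])
    have hnd : f.natDegree + g.natDegree = 1 := by
      have := natDegree_mul hf0 hg0
      rw [← hfg] at this
      have hnd1 : (C a * X + C b).natDegree = 1 := natDegree_eq_of_degree_eq_some hdeg
      omega
    have hlc : a = f.leadingCoeff * g.leadingCoeff := by
      rw [← leadingCoeff_mul, ← hfg, leadingCoeff_linear ha0]
    rcases Nat.add_eq_one_iff.mp hnd with ⟨hf, _⟩ | ⟨_, hg⟩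
    · left
      rw [eq_C_of_natDegree_eq_zero hf]
      have hfc : f.coeff 0 = f.leadingCoeff := by rw [Polynomial.leadingCoeff, hf]
      rw [hfc]
      refine isUnit_C.mpr (isUnit_of_mul_isUnit_left (y := g.leadingCoeff) ?_)
      rw [← hlc]; exact ha
    · right
      rw [eq_C_of_natDegree_eq_zero hg]
      have hgc : g.coeff 0 = g.leadingCoeff := by rw [Polynomial.leadingCoeff, hg]
      rw [hgc]
      refine isUnit_C.mpr (isUnit_of_mul_isUnit_right (x := f.leadingCoeff) ?_)
      rw [← hlc]; exact ha

end Linear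

namespace KNsq

noncomputable abbrev R : Type := MvPolynomial (Fin 2) ℚ

noncomputable def e : R ≃ₐ[ℚ] Polynomial (MvPolynomial (Fin 1) ℚ) :=
  (MvPolynomial.renameEquiv ℚ (Equiv.swap 0 1)).trans (MvPolynomial.finSuccEquiv ℚ 1)

noncomputable def A : R := MvPolynomial.X 0 ^ 2 + 4 * MvPolynomial.X 1
noncomputable def B : R := 1 + 4 * MvPolynomial.X 0 - 16 * MvPolynomial.X 1

lemma e_X0 : e (MvPolynomial.X 0) = C (MvPolynomial.X 0) := by
  simp only [e, AlgEquiv.trans_apply, MvPolynomial.renameEquiv_apply, MvPolynomial.rename_X]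
  rw [show (Equiv.swap (0 : Fin 2) 1) 0 = 1 from rfl]
  rw [show (1 : Fin 2) = Fin.succ 0 from rfl, MvPolynomial.finSuccEquiv_X_succ]

lemma e_X1 : e (MvPolynomial.X 1) = X := by
  simp only [e, AlgEquiv.trans_apply, MvPolynomial.renameEquiv_apply, MvPolynomial.rename_X]
  rw [show (Equiv.swap (0 : Fin 2) 1) 1 = 0 from rfl, MvPolynomial.finSuccEquiv_X_zero]

lemma e_A : e A = C (4 : MvPolynomial (Fin 1) ℚ) * X + C (MvPolynomial.X 0 ^ 2) := by
  simp only [A, map_add, map_mul, map_pow, map_ofNat, e_X0, e_X1]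
  rw [← Polynomial.C_pow]
  ring

lemma e_B : e B = C (-16 : MvPolynomial (Fin 1) ℚ) * X + C (1 + 4 * MvPolynomial.X 0) := by
  have h16 : (C (-16 : MvPolynomial (Fin 1) ℚ)) = -16 := by
    rw [map_neg, map_ofNat]
  have hC : (C (1 + 4 * MvPolynomial.X 0) : Polynomial (MvPolynomial (Fin 1) ℚ))
      = 1 + 4 * C (MvPolynomial.X 0) := by
    rw [map_add, map_one, map_mul, map_ofNat]
  rw [h16, hC]
  simp only [B, map_sub, map_add, map_mul, map_one, map_ofNat, e_X0, e_X1]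
  ring

lemma isUnit4 : IsUnit (4 : MvPolynomial (Fin 1) ℚ) :=
  IsUnit.of_mul_eq_one (MvPolynomial.C (1/4 : ℚ)) (by
    rw [show (4 : MvPolynomial (Fin 1) ℚ) = MvPolynomial.C (4:ℚ) from
      (map_ofNat (MvPolynomial.C : ℚ →+* MvPolynomial (Fin 1) ℚ) 4).symm, ← map_mul]
    norm_num)

lemma isUnitNeg16 : IsUnit (-16 : MvPolynomial (Fin 1) ℚ) :=
  IsUnit.of_mul_eq_one (MvPolynomial.C (-(1/16) : ℚ)) (by
    rw [show (-16 : MvPolynomial (Fin 1) ℚ) = MvPolynomial.C (-16:ℚ) by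
      rw [map_neg, map_ofNat (MvPolynomial.C : ℚ →+* MvPolynomial (Fin 1) ℚ) 16], ← map_mul]
    norm_num)

lemma irredA : Irreducible A := by
  rw [← MulEquiv.irreducible_iff e.toMulEquiv]
  show Irreducible (e A)
  rw [e_A]; exact irreducible_linear isUnit4

lemma irredB : Irreducible B := by
  rw [← MulEquiv.irreducible_iff e.toMulEquiv]
  show Irreducible (e B)
  rw [e_B]; exact irreducible_linear isUnitNeg16

lemma not_assoc : ¬ Associated A B := by
  rintro ⟨u, hu⟩
  have h1 : MvPolynomial.eval (fun _ => (0:ℚ)) A = 0 := by simp [A]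
  have h2 : MvPolynomial.eval (fun _ => (0:ℚ)) B = 1 := by simp [B]
  have hev := congrArg (MvPolynomial.eval (fun _ => (0:ℚ))) hu
  rw [map_mul, h1, h2, zero_mul] at hev
  exact zero_ne_one hev

lemma not_isSquare_of_irreducible {x : R} (h : Irreducible x) : ¬ IsSquare x := by
  rintro ⟨w, hw⟩
  rcases h.isUnit_or_isUnit hw with hu | hu <;>
    exact h.not_isUnit (hw ▸ hu.mul hu)

lemma not_isSquare_AB : ¬ IsSquare (A * B) := by
  rintro ⟨w, hw⟩
  have hprime : Prime A := irredA.prime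
  have hdvd : A ∣ w := by
    have hABdvd : A ∣ w * w := ⟨B, hw.symm⟩
    rcases hprime.dvd_mul.mp hABdvd with h | h <;> exact h
  obtain ⟨w', hw'⟩ := hdvd
  rw [hw'] at hw
  have hA0 : A ≠ 0 := hprime.ne_zero
  have hB : B = A * w' ^ 2 := by
    apply mul_left_cancel₀ hA0
    rw [hw]; ring
  rcases irredB.isUnit_or_isUnit hB with hu | hu
  · exact irredA.not_isUnit hu
  · have hu' : IsUnit w' := by
      have := isUnit_pow_iff (two_ne_zero (α := ℕ)) |>.mp hu
      exact this
    refine not_assoc ⟨hu.unit, ?_⟩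
    rw [IsUnit.unit_spec]
    exact hB.symm

end KNsq

namespace KNsq

noncomputable def a : K := n^2 + 4*c
noncomputable def b : K := 1 + 4*n - 16*c

lemma map_A : algebraMap R K A = a := by
  simp only [A, map_add, map_mul, map_pow, map_ofNat, a, n, c]

lemma map_B : algebraMap R K B = b := by
  simp only [B, map_sub, map_add, map_mul, map_one, map_ofNat, b, n, c]

lemma not_isSquare_map {x : R} (h : ¬ IsSquare x) : ¬ IsSquare (algebraMap R K x) := by
  rintro ⟨z, hz⟩
  have hint : IsIntegral R z := by
    refine ⟨Polynomial.X ^ 2 - Polynomial.C x, Polynomial.monic_X_pow_sub_C x (by norm_num), ?_⟩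
    simp only [Polynomial.eval₂_sub, Polynomial.eval₂_pow, Polynomial.eval₂_X,
      Polynomial.eval₂_C]
    rw [pow_two, ← hz, sub_self]
  obtain ⟨y, hy⟩ := IsIntegrallyClosed.isIntegral_iff.mp hint
  refine h ⟨y, ?_⟩
  apply IsFractionRing.injective R K
  rw [map_mul, hy, ← hz]

lemma nsq_a : ¬ IsSquare a := map_A ▸ not_isSquare_map (not_isSquare_of_irreducible irredA)

lemma nsq_b : ¬ IsSquare b := map_B ▸ not_isSquare_map (not_isSquare_of_irreducible irredB)

lemma nsq_ab : ¬ IsSquare (a * b) := by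
  rw [← map_A, ← map_B, ← map_mul]
  exact not_isSquare_map not_isSquare_AB

lemma a_ne_zero : a ≠ 0 := fun h => nsq_a (h ▸ ⟨0, by ring⟩)

lemma noroot : ∀ t : K, t * t - (1 + 2*n) * t + a ≠ 0 := by
  intro t h
  apply nsq_b
  refine ⟨2*t - (1 + 2*n), ?_⟩
  simp only [a, b] at h ⊢
  linear_combination (-4 : K) * h

end KNsq


open Equiv Pointwise

/-- Bundled `permCongr` as a `MulEquiv`. -/
def permMulEquiv {α β : Type*} (e : α ≃ β) : Perm α ≃* Perm β :=
  { Equiv.permCongr e with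
    map_mul' := by
      intro p q
      ext x
      simp [Equiv.permCongr, Equiv.equivCongr] }

noncomputable def c4 : Perm (Fin 4) := finRotate 4
def s4 : Perm (Fin 4) := Equiv.swap 1 3

noncomputable def d4fun : DihedralGroup 4 → Perm (Fin 4)
  | DihedralGroup.r i => c4 ^ i.val
  | DihedralGroup.sr i => s4 * c4 ^ i.val

lemma d4fun_mul : ∀ x y : DihedralGroup 4, d4fun (x * y) = d4fun x * d4fun y := by
  decide

lemma d4fun_inj : Function.Injective d4fun := by
  intro x y h
  revert h
  revert x y
  decide

noncomputable def d4hom : DihedralGroup 4 →* Perm (Fin 4) :=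
  MonoidHom.mk' d4fun d4fun_mul

lemma card_d4range : Nat.card d4hom.range = 8 := by
  have : Nat.card (DihedralGroup 4) = 8 := by
    simp [Nat.card_eq_fintype_card, DihedralGroup.card]
  rw [← this]
  exact (Nat.card_congr (MonoidHom.ofInjective (f := d4hom) d4fun_inj).toEquiv).symm

lemma factorization24 : (Nat.card (Perm (Fin 4))).factorization 2 = 3 := by
  have : Nat.card (Perm (Fin 4)) = 24 := by
    simp [Nat.card_eq_fintype_card, Fintype.card_perm]; rfl
  rw [this]
  have h24 : (24:ℕ) = 2 ^ 3 * 3 := rfl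
  rw [h24, Nat.factorization_mul (by norm_num) (by norm_num),
    Nat.Prime.factorization_pow Nat.prime_two]
  simp [Nat.factorization_eq_zero_of_not_dvd (by norm_num : ¬ (2:ℕ) ∣ 3)]

/-- Any subgroup of `S₄` of order 8 is isomorphic to `D₄`. -/
theorem subgroupOfCardEight (H : Subgroup (Perm (Fin 4))) (hH : Nat.card H = 8) :
    Nonempty (H ≃* DihedralGroup 4) := by
  have h8 : (8 : ℕ) = 2 ^ (Nat.card (Perm (Fin 4))).factorization 2 := by
    rw [factorization24]; norm_num
  haveI : Fact (Nat.Prime 2) := ⟨Nat.prime_two⟩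
  let PH : Sylow 2 (Perm (Fin 4)) := Sylow.ofCard H (hH.trans h8)
  let PK : Sylow 2 (Perm (Fin 4)) := Sylow.ofCard d4hom.range (card_d4range.trans h8)
  obtain ⟨g, hg⟩ := MulAction.exists_smul_eq (Perm (Fin 4)) PK PH
  have hsub : MulAut.conj g • d4hom.range = H := by
    have := congrArg (Sylow.toSubgroup) hg
    rwa [Sylow.coe_subgroup_smul] at this
  have e1 : d4hom.range ≃* (MulAut.conj g • d4hom.range : Subgroup (Perm (Fin 4))) :=
    Subgroup.equivSMul (MulAut.conj g) d4hom.range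
  have e2 : (MulAut.conj g • d4hom.range : Subgroup (Perm (Fin 4))) ≃* H :=
    MulEquiv.subgroupCongr hsub
  have e3 : DihedralGroup 4 ≃* d4hom.range := MonoidHom.ofInjective d4fun_inj
  exact ⟨(e3.trans (e1.trans e2)).symm⟩

open Polynomial in
set_option maxHeartbeats 1000000 in
set_option synthInstance.maxHeartbeats 400000 in
lemma P4_natDegree : P₄.natDegree = 4 := by unfold P₄; compute_degree!

open Polynomial in
set_option maxHeartbeats 1000000 in
set_option synthInstance.maxHeartbeats 400000 in
lemma P4_monic : P₄.Monic := by unfold P₄; monicity!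

lemma P4_ne : P₄ ≠ 0 := P4_monic.ne_zero

open Polynomial in
lemma P4_degree : P₄.degree = 4 := by
  rw [Polynomial.degree_eq_natDegree P4_ne, P4_natDegree]; rfl

open Polynomial IntermediateField KNsq in
set_option maxHeartbeats 1000000 in
set_option synthInstance.maxHeartbeats 400000 in
theorem main_core : Irreducible P₄ ∧ Fintype.card P₄.Gal = 8 := by
  classical
  set LL := P₄.SplittingField with hLL
  set φ : K →+* LL := algebraMap K LL with hφ
  have φinj : Function.Injective φ := φ.injective
  -- root x₁
  obtain ⟨x₁, hx₁0⟩ : ∃ x₁ : LL, eval x₁ (P₄.map φ) = 0 := (Polynomial.SplittingField.splits P₄).exists_eval_eq_zero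
    (by rw [degree_map, P4_degree]; norm_num)
  have hx₁ : aeval x₁ P₄ = 0 := by rwa [aeval_def, eval₂_eq_eval_map]
  have haev : x₁^4 - 2*x₁^3 + (1 - φ n)*x₁^2 + φ n * x₁ - φ c = 0 := by
    have h := hx₁
    simp only [P₄, map_sub, map_add, map_mul, map_pow, aeval_X, aeval_C, map_one,
      map_ofNat] at h
    linear_combination h
  set y₁ : LL := x₁*x₁ - x₁ with hy₁def
  have hx1q : x₁*x₁ - x₁ - y₁ = 0 := by rw [hy₁def]; ring
  have hy : y₁*y₁ - φ n * y₁ - φ c = 0 := by rw [hy₁def]; linear_combination haev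
  set y₂ : LL := φ n - y₁ with hy₂def
  have hsum : y₁ + y₂ = φ n := by rw [hy₂def]; ring
  have hprod : y₁ * y₂ = - φ c := by rw [hy₂def]; linear_combination (-1 : LL) * hy
  -- factorization of the mapped quartic
  have hfact : P₄.map φ = (X^2 - X - C y₁) * (X^2 - X - C y₂) := by
    have hmap : P₄.map φ = X^4 - 2*X^3 + (1 - C (φ n)) * X^2 + C (φ n) * X - C (φ c) := by
      simp only [P₄, Polynomial.map_sub, Polynomial.map_add, Polynomial.map_mul,
        Polynomial.map_pow, Polynomial.map_X, Polynomial.map_C, Polynomial.map_ofNat,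
        Polynomial.map_one, map_sub, map_one]
    have h1 : (C y₁ : LL[X]) + C y₂ = C (φ n) := by rw [← map_add, hsum]
    have h2 : (C y₁ : LL[X]) * C y₂ = - C (φ c) := by rw [← map_mul, hprod, map_neg]
    rw [hmap]
    linear_combination (X^2 - X : LL[X]) * h1 - h2
  have hmapne : P₄.map φ ≠ 0 := by
    simpa using (Polynomial.map_ne_zero P4_ne : P₄.map φ ≠ 0)
  -- root x₃ of the second quadratic factor
  have hsplitid : (P₄.map φ).Splits := by
    exact Polynomial.SplittingField.splits P₄
  have hdvd2 : (X^2 - X - C y₂) ∣ P₄.map φ := ⟨X^2 - X - C y₁, by rw [hfact]; ring⟩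
  have hq2splits := hsplitid.of_dvd hmapne hdvd2
  have hq2deg : (X^2 - X - C y₂ : LL[X]).degree ≠ 0 := by
    have hnd2 : (X^2 - X - C y₂ : LL[X]).natDegree = 2 := by compute_degree!
    have hq2ne : (X^2 - X - C y₂ : LL[X]) ≠ 0 := fun h => by
      rw [h] at hnd2; simp at hnd2
    rw [Polynomial.degree_eq_natDegree hq2ne, hnd2]
    simp
  obtain ⟨x₃, hx₃0⟩ := hq2splits.exists_eval_eq_zero hq2deg
  have hx₃ : x₃*x₃ - x₃ - y₂ = 0 := by
    have h := hx₃0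
    simp only [eval_sub, eval_pow, eval_X, eval_C, eval₂_sub, eval₂_pow, eval₂_X, eval₂_C, RingHom.id_apply] at h
    linear_combination h
  -- the square roots
  set α : LL := 2*y₁ - φ n with hαdef
  have hmapa : φ a = φ n * φ n + 4 * φ c := by
    simp only [a, map_add, map_mul, map_pow, map_ofNat]; ring
  have hα : α * α = φ a := by rw [hαdef, hmapa]; linear_combination 4*hy
  have hmapb : φ b = 1 + 4*φ n - 16*φ c := by
    simp only [b, map_sub, map_add, map_mul, map_one, map_ofNat]
  set γ : LL := 2*x₁ - 1 with hγdef
  set δ : LL := 2*x₃ - 1 with hδdef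
  set β : LL := γ * δ with hβdef
  have hγ2 : γ*γ = 1 + 4*y₁ := by rw [hγdef]; linear_combination 4*hx1q
  have hδ2 : δ*δ = 1 + 4*y₂ := by rw [hδdef]; linear_combination 4*hx₃
  set uL : LL := φ (1 + 2*n) + (α + α) with huLdef
  have hmapu : φ (1 + 2*n) = 1 + 2*φ n := by simp only [map_add, map_mul, map_one, map_ofNat]
  have hγ : γ * γ = uL := by
    rw [huLdef, hmapu, hαdef]; linear_combination 4*hx1q + 0*hy
  have hβ : β * β = φ b := by
    rw [hβdef, hmapb]
    linear_combination (δ*δ) * hγ2 + (1 + 4*y₁) * hδ2 + 4*hsum + 16*hprod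
  have hγne : γ ≠ 0 := by
    intro h0
    apply nsq_a
    refine ⟨(1+2*n)/2, φinj ?_⟩
    have hmap2 : φ ((1+2*n)/2) = (1 + 2*φ n)/2 := by
      rw [map_div₀, map_ofNat, map_add, map_mul, map_one, map_ofNat]
    rw [map_mul, ← hα, hmap2]
    have h1 : (0:LL) = 1 + 2*φ n + (α + α) := by
      rw [← hmapu, ← huLdef, ← hγ, h0, mul_zero]
    linear_combination (-(α - (1+2*φ n)/2)/2 : LL) * h1
  -- the tower of quadratic extensions
  set F₁ : IntermediateField K LL := K⟮α⟯ with hF₁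
  have hr₁ : Module.finrank K F₁ = 2 := quad_finrank hα nsq_a
  have hαmem : α ∈ F₁ := mem_adjoin_simple_self K α
  set b₁ : F₁ := algebraMap K F₁ b with hb₁def
  have hb₁L : algebraMap F₁ LL b₁ = φ b := by
    rw [hb₁def, ← IsScalarTower.algebraMap_apply]
  have hβ₁ : β * β = algebraMap F₁ LL b₁ := by rw [hb₁L]; exact hβ
  have nsqb₁ : ¬ IsSquare b₁ := by
    rintro ⟨z, hz⟩
    have hzL : (z:LL) * (z:LL) = φ b := by rw [← hb₁L, hz, map_mul]; rfl
    obtain ⟨p, q, hpq⟩ := quad_rep hα z.2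
    rw [hpq] at hzL
    have hkey : algebraMap K LL (p*p + q*q*a - b) + algebraMap K LL (2*p*q) * α = 0 := by
      simp only [map_add, map_sub, map_mul, map_ofNat]
      linear_combination hzL - (algebraMap K LL q * algebraMap K LL q) * hα
    obtain ⟨h1, h2⟩ := quad_indep hα nsq_a hkey
    have hpq0 : p = 0 ∨ q = 0 := by
      rcases mul_eq_zero.mp h2 with h | h
      · rcases mul_eq_zero.mp h with h' | h'
        · exact absurd h' two_ne_zero
        · exact Or.inl h'
      · exact Or.inr h
    rcases hpq0 with hp | hq
    · apply nsq_ab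
      refine ⟨q*a, ?_⟩
      rw [hp] at h1
      linear_combination (-a : K) * h1
    · apply nsq_b
      refine ⟨p, ?_⟩
      rw [hq] at h1
      linear_combination (-1 : K) * h1
  set F₂ : IntermediateField F₁ LL := F₁⟮β⟯ with hF₂
  have hr₂ : Module.finrank F₁ F₂ = 2 := quad_finrank hβ₁ nsqb₁
  have hβmem : β ∈ F₂ := mem_adjoin_simple_self F₁ β
  have humem : uL ∈ F₁ := by
    rw [huLdef]
    exact add_mem (F₁.algebraMap_mem _) (add_mem hαmem hαmem)
  set u : F₁ := ⟨uL, humem⟩ with hudef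
  have huL : algebraMap F₁ LL u = uL := rfl
  set u₂ : F₂ := algebraMap F₁ F₂ u with hu₂def
  have hu₂L : algebraMap F₂ LL u₂ = uL := by
    rw [hu₂def, ← IsScalarTower.algebraMap_apply, huL]
  have hγu₂ : γ * γ = algebraMap F₂ LL u₂ := by rw [hu₂L]; exact hγ
  have nsqu₂ : ¬ IsSquare u₂ := by
    rintro ⟨z, hz⟩
    have hzL : (z:LL) * (z:LL) = uL := by rw [← hu₂L, hz, map_mul]; rfl
    obtain ⟨P, Q, hPQ⟩ := quad_rep hβ₁ z.2
    rw [hPQ] at hzL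
    have hkey : algebraMap F₁ LL (P*P + Q*Q*b₁ - u) + algebraMap F₁ LL (2*P*Q) * β = 0 := by
      simp only [map_add, map_sub, map_mul, map_ofNat, huL, hb₁L]
      linear_combination hzL - (algebraMap F₁ LL Q * algebraMap F₁ LL Q) * hβ
    obtain ⟨h1, h2⟩ := quad_indep hβ₁ nsqb₁ hkey
    have hPQ0 : P = 0 ∨ Q = 0 := by
      rcases mul_eq_zero.mp h2 with h | h
      · rcases mul_eq_zero.mp h with h' | h'
        · exact absurd h' two_ne_zero
        · exact Or.inl h'
      · exact Or.inr h
    rcases hPQ0 with hP | hQ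
    · -- Q*Q*b₁ = u in F₁
      rw [hP] at h1
      have hb₁c : ((b₁ : F₁) : LL) = φ b := hb₁L
      have huLc : ((u : F₁) : LL) = uL := rfl
      have hQL : (Q:LL)*(Q:LL) * φ b = uL := by
        have hcg := congrArg (algebraMap F₁ LL) h1
        simp only [map_sub, map_add, map_mul, map_zero, zero_mul, zero_add,
          IntermediateField.algebraMap_apply, hb₁c, huLc] at hcg
        linear_combination hcg
      obtain ⟨q₀, q₁, hq⟩ := quad_rep hα Q.2
      rw [hq] at hQL
      rw [huLdef, hmapu] at hQL
      have hkey2 : algebraMap K LL (b*q₀*q₀ + b*q₁*q₁*a - (1+2*n)) +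
          algebraMap K LL (2*b*q₀*q₁ - 2) * α = 0 := by
        simp only [map_add, map_sub, map_mul, map_one, map_ofNat]
        linear_combination hQL - (algebraMap K LL b * algebraMap K LL q₁ * algebraMap K LL q₁) * hα
      obtain ⟨e1, e2⟩ := quad_indep hα nsq_a hkey2
      have e2' : b*q₀*q₁ - 1 = 0 := by linear_combination e2/2
      exact noroot (b*q₀*q₀) (by linear_combination b*q₀*q₀*e1 - a*(b*q₀*q₁+1)*e2')
    · -- P*P = u in F₁
      rw [hQ] at h1
      have huLc : ((u : F₁) : LL) = uL := rfl
      have hPL : (P:LL)*(P:LL) = uL := by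
        have hcg := congrArg (algebraMap F₁ LL) h1
        simp only [map_sub, map_add, map_mul, map_zero, zero_mul, mul_zero, add_zero,
          IntermediateField.algebraMap_apply, huLc] at hcg
        linear_combination hcg
      obtain ⟨p₀, p₁, hp⟩ := quad_rep hα P.2
      rw [hp] at hPL
      rw [huLdef, hmapu] at hPL
      have hkey2 : algebraMap K LL (p₀*p₀ + p₁*p₁*a - (1+2*n)) +
          algebraMap K LL (2*p₀*p₁ - 2) * α = 0 := by
        simp only [map_add, map_sub, map_mul, map_one, map_ofNat]
        linear_combination hPL - (algebraMap K LL p₁ * algebraMap K LL p₁) * hα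
      obtain ⟨e1, e2⟩ := quad_indep hα nsq_a hkey2
      have e2' : p₀*p₁ - 1 = 0 := by linear_combination e2/2
      exact noroot (p₀*p₀) (by linear_combination p₀*p₀*e1 - a*(p₀*p₁+1)*e2')
  set F₃ : IntermediateField F₂ LL := F₂⟮γ⟯ with hF₃
  have hr₃ : Module.finrank F₂ F₃ = 2 := quad_finrank hγu₂ nsqu₂
  have hγF₃ : γ ∈ F₃ := mem_adjoin_simple_self F₂ γ
  have hβF₃ : β ∈ F₃ := F₃.algebraMap_mem (⟨β, hβmem⟩ : F₂)
  have hδF₃ : δ ∈ F₃ := by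
    have hδeq : δ = β * γ⁻¹ := by rw [hβdef, mul_comm γ δ, mul_inv_cancel_right₀ hγne]
    rw [hδeq]
    exact mul_mem hβF₃ (inv_mem hγF₃)
  have h2F₃ : (2:LL) ∈ F₃ := by
    rw [show (2:LL) = 1 + 1 by norm_num]
    exact add_mem (one_mem _) (one_mem _)
  -- all roots lie in F₃
  have h2ne : (2:LL) ≠ 0 := two_ne_zero
  have hrootsub : ∀ z : LL, aeval z P₄ = 0 → z ∈ F₃ := by
    intro z hz
    have hev : (z*z - z - y₁) * (z*z - z - y₂) = 0 := by
      have h : eval z (P₄.map φ) = 0 := by rwa [eval_map, ← aeval_def]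
      rw [hfact] at h
      simp only [eval_mul, eval_sub, eval_pow, eval_X, eval_C] at h
      linear_combination h
    rcases mul_eq_zero.mp hev with h | h
    · have hfac : (2*z - 1 - γ)*(2*z - 1 + γ) = 0 := by linear_combination 4*h - hγ2
      rcases mul_eq_zero.mp hfac with h' | h'
      · have hzeq : z = (1 + γ) * (2:LL)⁻¹ := by rw [eq_mul_inv_iff_mul_eq₀ h2ne]; linear_combination h'
        rw [hzeq]
        exact mul_mem (add_mem (one_mem _) hγF₃) (inv_mem h2F₃)
      · have hzeq : z = (1 - γ) * (2:LL)⁻¹ := by rw [eq_mul_inv_iff_mul_eq₀ h2ne]; linear_combination h'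
        rw [hzeq]
        exact mul_mem (sub_mem (one_mem _) hγF₃) (inv_mem h2F₃)
    · have hfac : (2*z - 1 - δ)*(2*z - 1 + δ) = 0 := by linear_combination 4*h - hδ2
      rcases mul_eq_zero.mp hfac with h' | h'
      · have hzeq : z = (1 + δ) * (2:LL)⁻¹ := by rw [eq_mul_inv_iff_mul_eq₀ h2ne]; linear_combination h'
        rw [hzeq]
        exact mul_mem (add_mem (one_mem _) hδF₃) (inv_mem h2F₃)
      · have hzeq : z = (1 - δ) * (2:LL)⁻¹ := by rw [eq_mul_inv_iff_mul_eq₀ h2ne]; linear_combination h'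
        rw [hzeq]
        exact mul_mem (sub_mem (one_mem _) hδF₃) (inv_mem h2F₃)
  -- F₃ is everything
  have htop : F₃ = ⊤ := by
    rw [eq_top_iff]
    intro z _
    have hadj := Polynomial.SplittingField.adjoin_rootSet P₄
    have hz2 : z ∈ Algebra.adjoin K (P₄.rootSet P₄.SplittingField) := by
      rw [hadj]; trivial
    have hle : Algebra.adjoin K (P₄.rootSet P₄.SplittingField) ≤
        (IntermediateField.restrictScalars K
          (IntermediateField.restrictScalars (↥F₁) F₃)).toSubalgebra := by
      apply Algebra.adjoin_le
      intro w hw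
      have hw0 : aeval w P₄ = 0 := (Polynomial.mem_rootSet.mp hw).2
      exact hrootsub w hw0
    exact hle hz2
  have hrtop : Module.finrank F₂ LL = 2 := by
    rw [htop] at hr₃
    rwa [IntermediateField.finrank_top'] at hr₃
  have hfinK : Module.finrank K LL = 8 := by
    have t1 : Module.finrank K F₁ * Module.finrank F₁ LL = Module.finrank K LL :=
      Module.finrank_mul_finrank K F₁ LL
    have t2 : Module.finrank F₁ F₂ * Module.finrank F₂ LL = Module.finrank F₁ LL :=
      Module.finrank_mul_finrank F₁ F₂ LL
    rw [← t1, ← t2, hr₁, hr₂, hrtop]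
  -- irreducibility
  set E₀ : IntermediateField K LL := K⟮x₁⟯ with hE₀
  have hx₁int : IsIntegral K x₁ := IsIntegral.of_finite K x₁
  have hx₁E : x₁ ∈ E₀ := mem_adjoin_simple_self K x₁
  have hmdvd : minpoly K x₁ ∣ P₄ := minpoly.dvd K x₁ hx₁
  have hd : Module.finrank K E₀ = (minpoly K x₁).natDegree :=
    IntermediateField.adjoin.finrank hx₁int
  have hdle : Module.finrank K E₀ ≤ 4 := by
    rw [hd, ← P4_natDegree]
    exact Polynomial.natDegree_le_of_dvd hmdvd P4_ne
  have hddvd : Module.finrank K E₀ ∣ 8 := by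
    rw [← hfinK]
    exact ⟨Module.finrank E₀ LL, (Module.finrank_mul_finrank K E₀ LL).symm⟩
  have hF₁le : F₁ ≤ E₀ := by
    rw [hF₁, adjoin_simple_le_iff]
    have hy₁E : y₁ ∈ E₀ := by
      rw [hy₁def]; exact sub_mem (mul_mem hx₁E hx₁E) hx₁E
    have : y₁ + y₁ - φ n ∈ E₀ := sub_mem (add_mem hy₁E hy₁E) (E₀.algebraMap_mem n)
    have heq : α = y₁ + y₁ - φ n := by rw [hαdef]; ring
    rwa [heq]
  have hx₁nF₁ : x₁ ∉ F₁ := by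
    intro hmem
    have hγF₁ : γ ∈ F₁ := by
      rw [hγdef, show (2:LL)*x₁ - 1 = x₁ + x₁ - 1 by ring]
      exact sub_mem (add_mem hmem hmem) (one_mem _)
    have hγF₂ : γ ∈ F₂ := F₂.algebraMap_mem (⟨γ, hγF₁⟩ : F₁)
    exact nsqu₂ ⟨⟨γ, hγF₂⟩, Subtype.ext (by
      rw [show ((⟨γ, hγF₂⟩ * ⟨γ, hγF₂⟩ : F₂) : LL) = γ * γ from rfl]
      exact hγu₂.symm ▸ rfl)⟩
  have hd4 : Module.finrank K E₀ = 4 := by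
    have hne : Module.finrank K E₀ ≠ 1 ∧ Module.finrank K E₀ ≠ 2 := by
      constructor <;> intro hcon
      · have : F₁ = E₀ := IntermediateField.eq_of_le_of_finrank_le hF₁le (by omega)
        exact hx₁nF₁ (this ▸ hx₁E)
      · have : F₁ = E₀ := IntermediateField.eq_of_le_of_finrank_le hF₁le (by omega)
        exact hx₁nF₁ (this ▸ hx₁E)
    interval_cases h : Module.finrank K E₀
    · exact absurd hddvd (by norm_num)
    · exact absurd rfl hne.1
    · exact absurd rfl hne.2
    · exact absurd hddvd (by norm_num)
    · rfl
  have hminp : minpoly K x₁ = P₄ := by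
    have hnd : (minpoly K x₁).natDegree = 4 := by rw [← hd, hd4]
    obtain ⟨q, hq⟩ := hmdvd
    have hm := minpoly.monic hx₁int
    have hq0 : q ≠ 0 := fun h => P4_ne (by rw [hq, h, mul_zero])
    have hdeg : (4:ℕ) = 4 + q.natDegree := by
      conv_lhs => rw [← P4_natDegree]
      rw [hq, Polynomial.natDegree_mul hm.ne_zero hq0, hnd]
    have hqd : q.natDegree = 0 := by omega
    have hqC : q = C (q.coeff 0) := Polynomial.eq_C_of_natDegree_eq_zero hqd
    have hlc : (1:K) = q.coeff 0 := by
      have hl := congrArg Polynomial.leadingCoeff hq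
      rw [Polynomial.leadingCoeff_mul, hm.leadingCoeff, one_mul,
        P4_monic.leadingCoeff] at hl
      have hql : q.coeff 0 = q.leadingCoeff := by rw [Polynomial.leadingCoeff, hqd]
      rw [hql, ← hl]
    have hq1 : q = 1 := by rw [hqC, ← hlc, map_one]
    exact (hq.trans (by rw [hq1, mul_one])).symm
  have hirr : Irreducible P₄ := hminp ▸ minpoly.irreducible hx₁int
  refine ⟨hirr, ?_⟩
  haveI : CharZero K :=
    charZero_of_injective_algebraMap (IsFractionRing.injective (MvPolynomial (Fin 2) ℚ) K)
  haveI : IsGalois K LL := ⟨⟩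
  have := IsGalois.card_aut_eq_finrank K LL
  rw [show Fintype.card P₄.Gal = Fintype.card (LL ≃ₐ[K] LL) from rfl, ← Nat.card_eq_fintype_card, this, hfinK]


/-- `P̃_{n,c,4}` is irreducible over `ℚ(n,c)` and the Galois
group of its splitting field over `ℚ(n,c)` is isomorphic to the dihedral group
`D₄` of order 8. -/
theorem stmt_15 : Irreducible P₄ ∧ Nonempty (P₄.Gal ≃* DihedralGroup 4) := by
  obtain ⟨hirr, hcard⟩ := main_core
  refine ⟨hirr, ?_⟩
  haveI : CharZero K :=
    charZero_of_injective_algebraMap (IsFractionRing.injective (MvPolynomial (Fin 2) ℚ) K)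
  have hsep : P₄.Separable := hirr.separable
  haveI : Fact ((P₄.map (algebraMap K P₄.SplittingField)).Splits) :=
    ⟨Polynomial.SplittingField.splits P₄⟩
  have hc4 : Fintype.card (P₄.rootSet P₄.SplittingField) = 4 := by
    rw [Polynomial.card_rootSet_eq_natDegree hsep (Polynomial.SplittingField.splits P₄),
      P4_natDegree]
  let e : ↑(P₄.rootSet P₄.SplittingField) ≃ Fin 4 := Fintype.equivFinOfCardEq hc4
  let ψ : P₄.Gal →* Equiv.Perm (Fin 4) :=
    (permMulEquiv e).toMonoidHom.comp (Polynomial.Gal.galActionHom P₄ P₄.SplittingField)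
  have hinj : Function.Injective ψ :=
    (permMulEquiv e).injective.comp (Polynomial.Gal.galActionHom_injective P₄ P₄.SplittingField)
  have hcardR : Nat.card ψ.range = 8 := by
    have h1 : Nat.card P₄.Gal = Nat.card ψ.range :=
      Nat.card_congr (MonoidHom.ofInjective hinj).toEquiv
    rw [← h1, Nat.card_eq_fintype_card, hcard]
  obtain ⟨e2⟩ := subgroupOfCardEight ψ.range hcardR
  exact ⟨(MonoidHom.ofInjective hinj).trans e2⟩
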